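/- (Combined deleting and disturbing for vector line integrals, fixed K) Under the setup of the vector line integral with equal partitions, tags tₖ*, and disturbed step sizes Δt̃ₖ ≥ 0 satisfying ∑_k |Δt̃ₖ − (b−a)/m| → 0 and max_k Δt̃ₖ → 0, for a fixed K ≥ 1 and index sets J_K(m) of size K, the sums ∑_{k ∉ J_K(m)} F(x(tₖ*))·x′(tₖ*)·Δt̃ₖ converge to ∫_a^b F(x(t))·x′(t) dt as m → ∞. -/

import Mathlib

open Filter Topology Set

private lemma riemann_sum_tendsto_aux (a b : ℝ) (hab : a < b) (g : ℝ → ℝ)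
    (hg : ContinuousOn g (Icc a b)) (ts : ℕ → ℕ → ℝ)
    (hts : ∀ (m k : ℕ), k < m →
      ts m k ∈ Icc (a + (k : ℝ) * (b - a) / (m : ℝ)) (a + ((k : ℝ) + 1) * (b - a) / (m : ℝ))) :
    Tendsto (fun m : ℕ => ∑ k ∈ Finset.range m, g (ts m k) * ((b - a) / (m : ℝ)))
      atTop (𝓝 (∫ t in a..b, g t)) := by
  have hba : 0 < b - a := sub_pos.mpr hab
  rw [Metric.tendsto_atTop]
  intro ε hε
  set ε' := ε / (2 * (b - a)) with hε'def
  have hε' : 0 < ε' := by positivity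
  have huc := (isCompact_Icc (a := a) (b := b)).uniformContinuousOn_of_continuous hg
  rw [Metric.uniformContinuousOn_iff] at huc
  obtain ⟨δ, hδ, hδ'⟩ := huc ε' hε'
  obtain ⟨N, hN⟩ := exists_nat_gt ((b - a) / δ)
  refine ⟨max N 1, fun m hm => ?_⟩
  have hm1 : 1 ≤ m := le_trans (le_max_right _ _) hm
  have hmN : (N : ℝ) ≤ (m : ℝ) := Nat.cast_le.mpr (le_trans (le_max_left _ _) hm)
  have hm1' : (1 : ℝ) ≤ (m : ℝ) := by exact_mod_cast hm1
  have hm0 : (0 : ℝ) < (m : ℝ) := by linarith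
  set h := (b - a) / (m : ℝ) with hhdef
  have hh : 0 < h := by positivity
  have hhδ : h < δ := by
    rw [hhdef, div_lt_iff₀ hm0]
    rw [div_lt_iff₀ hδ] at hN
    nlinarith [hδ.le]
  set p : ℕ → ℝ := fun k => a + (k : ℝ) * h with hpdef
  have hpk : ∀ k : ℕ, p (k + 1) - p k = h := by
    intro k; simp only [hpdef]; push_cast; ring
  have hmono : ∀ k : ℕ, p k ≤ p (k + 1) := by
    intro k; have := hpk k; linarith
  have hsub : ∀ k : ℕ, k < m → Icc (p k) (p (k + 1)) ⊆ Icc a b := by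
    intro k hk
    apply Icc_subset_Icc
    · simp only [hpdef]; nlinarith [Nat.cast_nonneg (α := ℝ) k]
    · simp only [hpdef]
      have hk' : ((k : ℝ) + 1) ≤ (m : ℝ) := by exact_mod_cast hk
      have h1 : ((k : ℝ) + 1) * h ≤ (m : ℝ) * h := mul_le_mul_of_nonneg_right hk' hh.le
      have h2 : (m : ℝ) * h = b - a := by
        rw [hhdef]; field_simp
      push_cast
      linarith
  have hint : ∀ k : ℕ, k < m → IntervalIntegrable g MeasureTheory.volume (p k) (p (k + 1)) := by
    intro k hk
    apply ContinuousOn.intervalIntegrable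
    rw [Set.uIcc_of_le (hmono k)]
    exact hg.mono (hsub k hk)
  have hsplit : ∑ k ∈ Finset.range m, ∫ t in (p k)..(p (k + 1)), g t
      = ∫ t in (p 0)..(p m), g t := intervalIntegral.sum_integral_adjacent_intervals hint
  have hp0 : p 0 = a := by simp [hpdef]
  have hpm : p m = b := by
    simp only [hpdef, hhdef]
    field_simp
    ring
  -- tags lie in each subinterval
  have htag : ∀ k : ℕ, k < m → ts m k ∈ Icc (p k) (p (k + 1)) := by
    intro k hk
    have := hts m k hk
    simp only [hpdef, hhdef]
    constructor
    · have := this.1; rw [mul_div_assoc] at this; exact this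
    · have := this.2
      rw [mul_div_assoc] at this
      push_cast
      exact this
  rw [Real.dist_eq]
  have hrw : (∑ k ∈ Finset.range m, g (ts m k) * h) - (∫ t in a..b, g t)
      = ∑ k ∈ Finset.range m,
        (∫ t in (p k)..(p (k + 1)), (g (ts m k) - g t)) := by
    rw [← hp0, ← hpm, ← hsplit, ← Finset.sum_sub_distrib]
    apply Finset.sum_congr rfl
    intro k hk
    rw [Finset.mem_range] at hk
    rw [intervalIntegral.integral_sub intervalIntegrable_const (hint k hk),
      intervalIntegral.integral_const, hpk k, smul_eq_mul, mul_comm]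
  have hbound : ∀ k ∈ Finset.range m,
      |∫ t in (p k)..(p (k + 1)), (g (ts m k) - g t)| ≤ ε' * h := by
    intro k hk
    rw [Finset.mem_range] at hk
    have key : ∀ t ∈ Set.uIoc (p k) (p (k + 1)), ‖g (ts m k) - g t‖ ≤ ε' := by
      intro t ht
      rw [Set.uIoc_of_le (hmono k)] at ht
      have htmem : t ∈ Icc (p k) (p (k + 1)) := ⟨ht.1.le, ht.2⟩
      have htsm := htag k hk
      have hdist : dist (ts m k) t < δ := by
        rw [Real.dist_eq, abs_sub_lt_iff]
        have h1 := htsm.1; have h2 := htsm.2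
        have h3 := htmem.1; have h4 := htmem.2
        have h5 := hpk k
        constructor <;> linarith
      have := hδ' (ts m k) (hsub k hk htsm) t (hsub k hk htmem) hdist
      rw [Real.dist_eq] at this
      exact le_of_lt this
    have := intervalIntegral.norm_integral_le_of_norm_le_const key
    rw [hpk k, abs_of_pos hh] at this
    exact this
  calc |(∑ k ∈ Finset.range m, g (ts m k) * h) - (∫ t in a..b, g t)|
      = |∑ k ∈ Finset.range m, (∫ t in (p k)..(p (k + 1)), (g (ts m k) - g t))| := by rw [hrw]
    _ ≤ ∑ k ∈ Finset.range m, |∫ t in (p k)..(p (k + 1)), (g (ts m k) - g t)| :=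
        Finset.abs_sum_le_sum_abs _ _
    _ ≤ ∑ _k ∈ Finset.range m, ε' * h := Finset.sum_le_sum hbound
    _ = (m : ℝ) * (ε' * h) := by rw [Finset.sum_const, Finset.card_range, nsmul_eq_mul]
    _ = ε' * (b - a) := by rw [hhdef]; field_simp
    _ = ε / 2 := by rw [hε'def]; field_simp
    _ < ε := by linarith

theorem deleting_and_disturbing_vector_line_integral
    (n : ℕ) (hn : 2 ≤ n)
    (a b : ℝ) (hab : a < b)
    (x x' : ℝ → EuclideanSpace ℝ (Fin n))
    (hx : ∀ t ∈ Icc a b, HasDerivWithinAt x (x' t) (Icc a b) t)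
    (hx' : ContinuousOn x' (Icc a b))
    (D : Set (EuclideanSpace ℝ (Fin n)))
    (F : EuclideanSpace ℝ (Fin n) → EuclideanSpace ℝ (Fin n))
    (hF : ContinuousOn F D)
    (himg : ∀ t ∈ Icc a b, x t ∈ D)
    -- tags in the equal partition
    (ts : ℕ → ℕ → ℝ)
    (hts : ∀ (m k : ℕ), k < m →
      ts m k ∈ Icc (a + (k : ℝ) * (b - a) / (m : ℝ)) (a + ((k : ℝ) + 1) * (b - a) / (m : ℝ)))
    -- disturbed step sizes
    (c : ℕ → ℕ → ℝ)
    (hc : ∀ (m k : ℕ), k < m → 0 ≤ c m k)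
    (hcsum : Tendsto (fun m : ℕ => ∑ k ∈ Finset.range m, |c m k - (b - a) / (m : ℝ)|)
      atTop (𝓝 0))
    -- max_k Δt̃ₖ → 0
    (hcmax : Tendsto (fun m : ℕ => ⨆ k ∈ Finset.range m, c m k) atTop (𝓝 0))
    (K : ℕ) (hK : 1 ≤ K)
    (J : ℕ → Finset ℕ)
    (hJ : ∀ m : ℕ, K < m → J m ⊆ Finset.range m ∧ (J m).card = K) :
    Tendsto (fun m : ℕ =>
        ∑ k ∈ Finset.range m \ J m, (inner ℝ (F (x (ts m k))) (x' (ts m k)) : ℝ) * c m k)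
      atTop (𝓝 (∫ t in a..b, (inner ℝ (F (x t)) (x' t) : ℝ))) := by
  set g : ℝ → ℝ := fun t => (inner ℝ (F (x t)) (x' t) : ℝ) with hgdef
  have hba : 0 < b - a := sub_pos.mpr hab
  -- continuity of g on [a,b]
  have hxc : ContinuousOn x (Icc a b) := fun t ht => (hx t ht).continuousWithinAt
  have hFx : ContinuousOn (fun t => F (x t)) (Icc a b) := hF.comp hxc himg
  have hg : ContinuousOn g (Icc a b) := hFx.inner hx'
  -- tags lie in [a,b]
  have htagab : ∀ (m k : ℕ), k < m → ts m k ∈ Icc a b := by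
    intro m k hk
    have hmem := hts m k hk
    have hm0 : (0 : ℝ) < (m : ℝ) := by
      have : 0 < m := Nat.pos_of_ne_zero (by omega)
      exact_mod_cast this
    constructor
    · have h1 := hmem.1
      have : 0 ≤ (k : ℝ) * (b - a) / (m : ℝ) := by positivity
      linarith
    · have h2 := hmem.2
      have hk1 : ((k : ℝ) + 1) ≤ (m : ℝ) := by exact_mod_cast hk
      have h3 : ((k : ℝ) + 1) * (b - a) / (m : ℝ) ≤ b - a := by
        rw [div_le_iff₀ hm0]
        nlinarith
      linarith
  -- bound on g
  obtain ⟨M, hM⟩ := (isCompact_Icc (a := a) (b := b)).exists_bound_of_continuousOn hg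
  have hM0 : 0 ≤ M := le_trans (norm_nonneg _) (hM a ⟨le_refl a, hab.le⟩)
  -- the undisturbed Riemann sums converge
  have hS : Tendsto (fun m : ℕ => ∑ k ∈ Finset.range m, g (ts m k) * ((b - a) / (m : ℝ)))
      atTop (𝓝 (∫ t in a..b, g t)) := riemann_sum_tendsto_aux a b hab g hg ts hts
  -- the full disturbed sums converge
  have hE1 : Tendsto (fun m : ℕ => (∑ k ∈ Finset.range m, g (ts m k) * c m k)
      - ∑ k ∈ Finset.range m, g (ts m k) * ((b - a) / (m : ℝ))) atTop (𝓝 0) := by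
    apply squeeze_zero_norm (a := fun m : ℕ => M * ∑ k ∈ Finset.range m, |c m k - (b - a) / (m : ℝ)|)
    · intro m
      rw [← Finset.sum_sub_distrib, Real.norm_eq_abs, Finset.mul_sum]
      refine le_trans (Finset.abs_sum_le_sum_abs _ _) (Finset.sum_le_sum ?_)
      intro k hk
      rw [Finset.mem_range] at hk
      have : g (ts m k) * c m k - g (ts m k) * ((b - a) / (m : ℝ))
          = g (ts m k) * (c m k - (b - a) / (m : ℝ)) := by ring
      rw [this, abs_mul]
      apply mul_le_mul_of_nonneg_right _ (abs_nonneg _)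
      simpa using hM (ts m k) (htagab m k hk)
    · simpa using hcsum.const_mul M
  have hfull : Tendsto (fun m : ℕ => ∑ k ∈ Finset.range m, g (ts m k) * c m k)
      atTop (𝓝 (∫ t in a..b, g t)) := by
    have := hE1.add hS
    simpa using this
  -- the deleted part tends to zero
  have hdel : Tendsto (fun m : ℕ => ∑ k ∈ J m, g (ts m k) * c m k) atTop (𝓝 0) := by
    apply squeeze_zero_norm' (a := fun m : ℕ =>
      M * ((∑ k ∈ Finset.range m, |c m k - (b - a) / (m : ℝ)|) + (K : ℝ) * ((b - a) / (m : ℝ))))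
    · filter_upwards [eventually_gt_atTop K] with m hm
      obtain ⟨hJsub, hJcard⟩ := hJ m hm
      rw [Real.norm_eq_abs]
      have step1 : |∑ k ∈ J m, g (ts m k) * c m k| ≤ ∑ k ∈ J m, M * c m k := by
        refine le_trans (Finset.abs_sum_le_sum_abs _ _) (Finset.sum_le_sum ?_)
        intro k hk
        have hkm : k < m := Finset.mem_range.mp (hJsub hk)
        rw [abs_mul, abs_of_nonneg (hc m k hkm)]
        apply mul_le_mul_of_nonneg_right _ (hc m k hkm)
        simpa using hM (ts m k) (htagab m k hkm)
      have step2 : ∑ k ∈ J m, M * c m k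
          ≤ M * ((∑ k ∈ Finset.range m, |c m k - (b - a) / (m : ℝ)|)
            + (K : ℝ) * ((b - a) / (m : ℝ))) := by
        rw [← Finset.mul_sum]
        apply mul_le_mul_of_nonneg_left _ hM0
        have ck_le : ∀ k ∈ J m, c m k ≤ |c m k - (b - a) / (m : ℝ)| + (b - a) / (m : ℝ) := by
          intro k hk
          have := le_abs_self (c m k - (b - a) / (m : ℝ))
          linarith
        calc ∑ k ∈ J m, c m k
            ≤ ∑ k ∈ J m, (|c m k - (b - a) / (m : ℝ)| + (b - a) / (m : ℝ)) :=
              Finset.sum_le_sum ck_le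
          _ = (∑ k ∈ J m, |c m k - (b - a) / (m : ℝ)|) + (J m).card * ((b - a) / (m : ℝ)) := by
              rw [Finset.sum_add_distrib, Finset.sum_const, nsmul_eq_mul]
          _ ≤ (∑ k ∈ Finset.range m, |c m k - (b - a) / (m : ℝ)|)
              + (K : ℝ) * ((b - a) / (m : ℝ)) := by
              apply add_le_add
              · exact Finset.sum_le_sum_of_subset_of_nonneg hJsub (fun _ _ _ => abs_nonneg _)
              · apply mul_le_mul_of_nonneg_right
                · exact le_of_eq (by rw [hJcard])
                · positivity
      exact le_trans step1 step2
    · have hlim2 : Tendsto (fun m : ℕ => (K : ℝ) * ((b - a) / (m : ℝ))) atTop (𝓝 0) := by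
        have : Tendsto (fun m : ℕ => (b - a) / (m : ℝ)) atTop (𝓝 0) :=
          Tendsto.div_atTop tendsto_const_nhds tendsto_natCast_atTop_atTop
        simpa using this.const_mul (K : ℝ)
      have := (hcsum.add hlim2).const_mul M
      simpa using this
  -- combine
  have heq : ∀ᶠ m in atTop, ∑ k ∈ Finset.range m \ J m, g (ts m k) * c m k
      = (∑ k ∈ Finset.range m, g (ts m k) * c m k) - ∑ k ∈ J m, g (ts m k) * c m k := by
    filter_upwards [eventually_gt_atTop K] with m hm
    exact Finset.sum_sdiff_eq_sub (hJ m hm).1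
  have hfinal := hfull.sub hdel
  rw [sub_zero] at hfinal
  exact Tendsto.congr' (heq.mono fun m h => h.symm) hfinal
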